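/- Let k ≥ 2 and let A be the 2k×2k adjacency matrix of the directed ladder graph K with vertices {1,...,2k}, arcs (2i−1, 2i+1) and (2i, 2i+2) indices mod 2k (forming two directed k-cycles on odd and even vertices), together with arcs (2i, 2i−1) from each even vertex to the odd vertex paired with it. Then σ(A) = { ±1 + e^{2πij/k} : j = 0,1,...,k−1 }. In particular, if k is odd all 2k eigenvalues are simple, so a directed graph can have more than 2r = 4 simple eigenvalues despite having a uniform automorphism of size k with r = 2 orbits. -/

import Mathlib

open Matrix Polynomial

variable {n : Type*} [DecidableEq n] [Fintype n] {R : Type*} [CommRing R]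

lemma my_charpoly_similar (S T A : Matrix n n R) (hST : S * T = 1) (hTS : T * S = 1) :
    (S * A * T).charpoly = A.charpoly := by
  set f : Matrix n n R →+* Matrix n n R[X] := (C : R →+* R[X]).mapMatrix with hf
  have hfST : f S * f T = 1 := by rw [← _root_.map_mul, hST, _root_.map_one]
  have hfTS : f T * f S = 1 := by rw [← _root_.map_mul, hTS, _root_.map_one]
  have key : charmatrix (S * A * T) = f S * charmatrix A * f T := by
    unfold charmatrix
    rw [Matrix.mul_sub, Matrix.sub_mul]
    congr 1
    · rw [(Matrix.scalar_commute (X : R[X]) (fun r => Commute.all _ _) (f S)).eq.symm,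
        mul_assoc, hfST, mul_one]
    · rw [← hf, _root_.map_mul, _root_.map_mul]
  unfold Matrix.charpoly
  rw [key, det_mul, det_mul]
  calc (f S).det * (charmatrix A).det * (f T).det
      = (charmatrix A).det * ((f T).det * (f S).det) := by ring
    _ = (charmatrix A).det := by rw [← det_mul, hfTS, det_one, mul_one]

lemma my_charpoly_diagonal (d : n → R) :
    (Matrix.diagonal d).charpoly = ∏ i, (X - C (d i)) := by
  have h : charmatrix (Matrix.diagonal d) = Matrix.diagonal fun i => X - C (d i) := by
    ext i j
    by_cases h : i = j
    · subst h; simp [charmatrix_apply_eq]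
    · rw [charmatrix_apply_ne _ _ _ h, Matrix.diagonal_apply_ne _ h, diagonal_apply_ne _ h]
      simp
  rw [Matrix.charpoly, h, det_diagonal]

lemma map_univ_prod {α β γ : Type*} [Fintype α] [Fintype β] [DecidableEq α] [DecidableEq β]
    (f : α × β → γ) :
    (Finset.univ : Finset (α × β)).val.map f
      = ∑ a : α, ((Finset.univ : Finset β).val.map fun b => f (a, b)) := by
  rw [← Finset.univ_product_univ, Finset.product_val]
  show ((Finset.univ.val.bind fun a => Multiset.map (Prod.mk a) Finset.univ.val).map f) = _
  rw [Multiset.map_bind, Finset.sum]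
  simp [Multiset.bind, Multiset.join, Function.comp, Multiset.map_map]

def flip2 : Fin 2 → Fin 2 := fun a => if a = 0 then 1 else 0

lemma flip2_ne : ∀ a a' : Fin 2, (a ≠ a') ↔ (a' = flip2 a) := by decide

set_option maxHeartbeats 1000000 in
/-- The directed ladder graph `K` on `2k` vertices (`k ≥ 2`): vertices `(i, a)`
with `a = 0` the odd rung and `a = 1` the even rung, arcs forming two directed
`k`-cycles `(i,a) → (i+1,a)` together with the vertical edges joining `(i,0)` and
`(i,1)` within each rung.  Its adjacency matrix `A` has spectrum
`{±1 + e^{2πij/k} : j = 0,...,k-1}`; in particular, if `k` is odd all `2k`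
eigenvalues are simple, so a directed graph may have more than `2r = 4` simple
eigenvalues despite admitting a uniform automorphism with `r = 2` orbits. -/
theorem directed_ladder_spectrum
    (k : ℕ) [NeZero k] (hk : 2 ≤ k)
    (A : Matrix (Fin k × Fin 2) (Fin k × Fin 2) ℂ)
    (hA : ∀ (i j : Fin k) (a b : Fin 2),
      A (i, a) (j, b) =
        (if a = b ∧ j = i + 1 then 1 else 0) +
        (if i = j ∧ a ≠ b then 1 else 0))
    (ω : ℂ) (hω : ω = Complex.exp (2 * Real.pi * Complex.I / k)) :
    A.charpoly.roots =
      ∑ j : Fin k, ({1 + ω ^ j.val, -1 + ω ^ j.val} : Multiset ℂ) ∧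
    (Odd k → A.charpoly.roots.Nodup) := by
  have hk0 : (k : ℂ) ≠ 0 := Nat.cast_ne_zero.mpr (NeZero.ne k)
  have hprim : IsPrimitiveRoot ω k := hω ▸ Complex.isPrimitiveRoot_exp k (NeZero.ne k)
  have hωk : ω ^ k = 1 := hprim.pow_eq_one
  have hωne : ω ≠ 0 := by
    intro h; rw [h, zero_pow (NeZero.ne k)] at hωk; exact zero_ne_one hωk
  set ε : Fin 2 → ℂ := fun a => if a = 0 then 1 else -1 with hε
  set d : Fin k × Fin 2 → ℂ := fun p => ε p.2 + ω ^ (p.1 : ℕ) with hd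
  set S : Matrix (Fin k × Fin 2) (Fin k × Fin 2) ℂ :=
    Matrix.of fun p q => ω ^ ((p.1 : ℕ) * (q.1 : ℕ)) * (-1 : ℂ) ^ ((p.2 : ℕ) * (q.2 : ℕ))
    with hS
  set T : Matrix (Fin k × Fin 2) (Fin k × Fin 2) ℂ :=
    Matrix.of fun q p =>
      (2 * (k : ℂ))⁻¹ * ((ω ^ ((q.1 : ℕ) * (p.1 : ℕ)))⁻¹ * (-1 : ℂ) ^ ((q.2 : ℕ) * (p.2 : ℕ)))
    with hT
  have hpowmod : ∀ m : ℕ, ω ^ (m % k) = ω ^ m := by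
    intro m
    conv_rhs => rw [← Nat.div_add_mod m k]
    rw [pow_add, pow_mul, hωk, one_pow, one_mul]
  have hgeom : ∀ z : ℂ, z ^ k = 1 →
      (∑ i : Fin k, z ^ (i : ℕ)) = if z = 1 then (k : ℂ) else 0 := by
    intro z hz
    rw [Fin.sum_univ_eq_sum_range]
    by_cases h1 : z = 1
    · simp [h1]
    · rw [if_neg h1, geom_sum_eq h1, hz, sub_self, zero_div]
  have hpow_inj : ∀ i j : Fin k, ω ^ (i : ℕ) = ω ^ (j : ℕ) → i = j := by
    intro i j h
    exact Fin.ext (hprim.pow_inj i.isLt j.isLt h)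
  -- S * T = 1
  have hST : S * T = 1 := by
    ext ⟨i, a⟩ ⟨i', a'⟩
    rw [mul_apply, Fintype.sum_prod_type]
    have entry : ∀ (j : Fin k) (b : Fin 2),
        S (i, a) (j, b) * T (j, b) (i', a') =
          (2 * (k : ℂ))⁻¹ * ((ω ^ (i : ℕ) * (ω ^ (i' : ℕ))⁻¹) ^ (j : ℕ) *
            ((-1 : ℂ) ^ ((a : ℕ) * (b : ℕ)) * (-1 : ℂ) ^ ((b : ℕ) * (a' : ℕ)))) := by
      intro j b
      show ω ^ ((i : ℕ) * (j : ℕ)) * (-1 : ℂ) ^ ((a : ℕ) * (b : ℕ)) *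
        ((2 * (k : ℂ))⁻¹ * ((ω ^ ((j : ℕ) * (i' : ℕ)))⁻¹ * (-1:ℂ) ^ ((b : ℕ) * (a' : ℕ)))) = _
      have e1 : (ω ^ ((j : ℕ) * (i' : ℕ)))⁻¹ = ((ω ^ (i' : ℕ))⁻¹) ^ (j : ℕ) := by
        rw [mul_comm (j : ℕ) (i' : ℕ), pow_mul, ← inv_pow]
      have e2 : (ω ^ (i : ℕ) * (ω ^ (i' : ℕ))⁻¹) ^ (j : ℕ)
          = ω ^ ((i : ℕ) * (j : ℕ)) * ((ω ^ (i' : ℕ))⁻¹) ^ (j : ℕ) := by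
        rw [mul_pow, ← pow_mul]
      rw [e1, e2]; ring
    calc (∑ j : Fin k, ∑ b : Fin 2, S (i, a) (j, b) * T (j, b) (i', a'))
        = (2 * (k : ℂ))⁻¹ * ((∑ j : Fin k, (ω ^ (i : ℕ) * (ω ^ (i' : ℕ))⁻¹) ^ (j : ℕ)) *
            (∑ b : Fin 2, (-1 : ℂ) ^ ((a : ℕ) * (b : ℕ)) * (-1 : ℂ) ^ ((b : ℕ) * (a' : ℕ)))) := by
          rw [Finset.sum_mul_sum, Finset.mul_sum]
          refine Finset.sum_congr rfl fun j _ => ?_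
          rw [Finset.mul_sum]
          exact Finset.sum_congr rfl fun b _ => entry j b
      _ = (1 : Matrix (Fin k × Fin 2) (Fin k × Fin 2) ℂ) (i, a) (i', a') := by
          have hzk : (ω ^ (i : ℕ) * (ω ^ (i' : ℕ))⁻¹) ^ k = 1 := by
            rw [mul_pow, inv_pow, ← pow_mul, ← pow_mul, mul_comm (i : ℕ) k,
              mul_comm (i' : ℕ) k, pow_mul, pow_mul, hωk, one_pow, one_pow, inv_one, mul_one]
          have h1 : (∑ j : Fin k, (ω ^ (i : ℕ) * (ω ^ (i' : ℕ))⁻¹) ^ (j : ℕ))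
              = if i = i' then (k : ℂ) else 0 := by
            rw [hgeom _ hzk]
            by_cases h : i = i'
            · rw [if_pos h, if_pos]; rw [h, mul_inv_cancel₀ (pow_ne_zero _ hωne)]
            · rw [if_neg h, if_neg]
              intro hcon
              refine h (hpow_inj _ _ ?_)
              field_simp at hcon
              exact hcon
          have h2 : (∑ b : Fin 2, (-1 : ℂ) ^ ((a : ℕ) * (b : ℕ)) * (-1 : ℂ) ^ ((b : ℕ) * (a' : ℕ)))
              = if a = a' then 2 else 0 := by
            rw [Fin.sum_univ_two]
            fin_cases a <;> fin_cases a' <;> norm_num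
          rw [h1, h2, one_apply]
          by_cases h : i = i' <;> by_cases h' : a = a' <;>
            simp only [h, h', Prod.ext_iff, if_true, if_false, and_true, true_and, if_pos,
              if_neg, not_and, and_false, false_and] <;>
            simp [h, h', Prod.ext_iff] <;> field_simp
  have hTS : T * S = 1 := mul_eq_one_comm.mp hST
  have hAS : A * S = S * Matrix.diagonal d := by
    ext ⟨i, a⟩ ⟨j, b⟩
    rw [mul_apply, mul_diagonal]
    have entry : ∀ x : Fin k × Fin 2,
        A (i, a) x * S x (j, b) =
          (if x = (i + 1, a) then S x (j, b) else 0) +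
          (if x = (i, flip2 a) then S x (j, b) else 0) := by
      rintro ⟨i', a'⟩
      rw [hA, add_mul, ite_mul, ite_mul, one_mul, zero_mul]
      congr 1
      · refine if_congr ?_ rfl rfl
        rw [Prod.ext_iff]
        constructor
        · rintro ⟨h1, h2⟩; exact ⟨h2, h1.symm⟩
        · rintro ⟨h1, h2⟩; exact ⟨h2.symm, h1⟩
      · refine if_congr ?_ rfl rfl
        rw [Prod.ext_iff]
        constructor
        · rintro ⟨h1, h2⟩; exact ⟨h1.symm, (flip2_ne a a').mp h2⟩
        · rintro ⟨h1, h2⟩; exact ⟨h1.symm, (flip2_ne a a').mpr h2⟩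
    rw [Finset.sum_congr rfl fun x _ => entry x, Finset.sum_add_distrib,
      Finset.sum_ite_eq' Finset.univ ((i + 1 : Fin k), a) (fun x => S x (j, b)),
      Finset.sum_ite_eq' Finset.univ ((i : Fin k), flip2 a) (fun x => S x (j, b)),
      if_pos (Finset.mem_univ _), if_pos (Finset.mem_univ _)]
    show ω ^ (((i + 1 : Fin k) : ℕ) * (j : ℕ)) * (-1 : ℂ) ^ ((a : ℕ) * (b : ℕ)) +
        ω ^ ((i : ℕ) * (j : ℕ)) * (-1 : ℂ) ^ ((flip2 a : ℕ) * (b : ℕ)) =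
        ω ^ ((i : ℕ) * (j : ℕ)) * (-1 : ℂ) ^ ((a : ℕ) * (b : ℕ)) * (ε b + ω ^ (j : ℕ))
    have hipow : ω ^ (((i + 1 : Fin k) : ℕ) * (j : ℕ))
        = ω ^ ((i : ℕ) * (j : ℕ)) * ω ^ (j : ℕ) := by
      have hval : ((i + 1 : Fin k) : ℕ) = ((i : ℕ) + 1) % k := by
        rw [Fin.val_add, Fin.val_one', Nat.mod_eq_of_lt (show 1 < k by omega)]
      rw [hval, pow_mul, hpowmod, ← pow_mul, add_mul, one_mul, pow_add]
    rw [hipow]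
    have hε0 : ε 0 = 1 := rfl
    have hε1 : ε 1 = -1 := rfl
    have hσ0 : flip2 0 = 1 := rfl
    have hσ1 : flip2 1 = 0 := rfl
    fin_cases a <;> fin_cases b <;>
      simp only [Fin.mk_zero, Fin.mk_one, hε0, hε1, hσ0, hσ1, Fin.isValue, Fin.val_zero,
        Fin.val_one, mul_zero, zero_mul, mul_one, one_mul, pow_zero, pow_one] <;> ring
  have hAeq : A = S * Matrix.diagonal d * T := by
    calc A = A * (S * T) := by rw [hST, mul_one]
    _ = (A * S) * T := by rw [mul_assoc]
    _ = S * Matrix.diagonal d * T := by rw [hAS]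
  have hchar : A.charpoly = (Matrix.diagonal d).charpoly := by
    rw [hAeq]; exact my_charpoly_similar _ _ _ hST hTS
  have hroots : A.charpoly.roots = (Finset.univ : Finset (Fin k × Fin 2)).val.map d := by
    rw [hchar, my_charpoly_diagonal]
    rw [Finset.prod_eq_multiset_prod]
    have hcomp : (fun i => X - C (d i)) = (fun a => (X : ℂ[X]) - C a) ∘ d := rfl
    rw [hcomp, ← Multiset.map_map]
    exact roots_multiset_prod_X_sub_C _
  constructor
  · rw [hroots, map_univ_prod]
    refine Finset.sum_congr rfl fun j _ => ?_
    show Multiset.map (fun b => d (j, b)) {0, 1} = _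
    rw [Multiset.insert_eq_cons, Multiset.map_cons, Multiset.map_singleton]
    rfl
  · intro hodd
    rw [hroots]
    refine Multiset.Nodup.map_on ?_ Finset.univ.nodup
    have hnsq : ∀ m : ℕ, Complex.normSq (ω ^ m) = 1 := by
      intro m
      have habs : ‖ω‖ = 1 := by
        rw [hω]
        have : 2 * (Real.pi : ℂ) * Complex.I / (k : ℂ)
            = ((2 * Real.pi / k : ℝ) : ℂ) * Complex.I := by
          push_cast; ring
        rw [this, Complex.norm_exp_ofReal_mul_I]
      have h1 : Complex.normSq ω = 1 := by
        rw [Complex.normSq_eq_norm_sq, habs, one_pow]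
      rw [map_pow, h1, one_pow]
    have key : ∀ i j : Fin k, ((1 : ℂ) + ω ^ (i : ℕ) = -1 + ω ^ (j : ℕ)) → False := by
      intro i j hcon
      have h2 : ω ^ (j : ℕ) = 2 + ω ^ (i : ℕ) := by linear_combination -hcon
      have e1 := hnsq (i : ℕ)
      have e2 := hnsq (j : ℕ)
      rw [h2] at e2
      simp only [Complex.normSq_apply, Complex.add_re, Complex.add_im, Complex.re_ofNat,
        Complex.im_ofNat] at e1 e2
      have hre : (ω ^ (i : ℕ)).re = -1 := by nlinarith
      have him : (ω ^ (i : ℕ)).im = 0 := by nlinarith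
      have hneg : ω ^ (i : ℕ) = -1 := by
        apply Complex.ext <;> simp [hre, him]
      have hone : ((-1 : ℂ)) ^ k = 1 := by
        rw [← hneg, ← pow_mul, mul_comm, pow_mul, hωk, one_pow]
      rw [Odd.neg_one_pow hodd] at hone
      exact absurd hone (by norm_num)
    rintro ⟨i, a⟩ - ⟨j, b⟩ - h
    have hdval : ∀ (i : Fin k) (a : Fin 2), d (i, a) = ε a + ω ^ (i : ℕ) := fun _ _ => rfl
    rw [hdval, hdval] at h
    have hε0 : ε 0 = 1 := rfl
    have hε1 : ε 1 = -1 := rfl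
    fin_cases a <;> fin_cases b <;>
      simp only [Fin.mk_zero, Fin.mk_one, hε0, hε1] at h
    · exact Prod.ext (hpow_inj _ _ (by linear_combination h)) rfl
    · exact absurd h (fun hc => key i j hc)
    · exact absurd h.symm (fun hc => key j i hc)
    · exact Prod.ext (hpow_inj _ _ (by linear_combination h)) rfl
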